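/- Let λ, μ > 0 with ρ = λ/μ, let m₀ ≥ 1 be real and set ν = m₀μ. Let X, S, θ be mutually independent random variables with X exponentially distributed with rate λ, S uniformly distributed on (0, 2/μ), and θ uniformly distributed on (0, 1/ν). Then P(X + S + θ < 1/ν) = 1/(4m₀) + (m₀(1 − e^{−ρ/m₀}) − ρ)/(2ρ²). (This is the missing probability of the M/U/1/1-D bufferless system.) -/

import Mathlib

open MeasureTheory ProbabilityTheory Real
open scoped ENNReal

section Helpers

lemma helper_inner_real {a B : ℝ} (ha : 0 < a) (haB : a ≤ B) :
    ∫ s in Set.Ioo (0:ℝ) B, max (a - s) 0 = a ^ 2 / 2 := by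
  have hsplit : Set.Ioo (0:ℝ) a ∪ Set.Ico a B = Set.Ioo 0 B :=
    Set.Ioo_union_Ico_eq_Ioo ha haB
  have hdisj : Disjoint (Set.Ioo (0:ℝ) a) (Set.Ico a B) := by
    apply Set.disjoint_left.2
    rintro x ⟨_, hx2⟩ ⟨hx3, _⟩
    exact absurd hx3 (not_le.2 hx2)
  have hint1 : IntegrableOn (fun s : ℝ => max (a - s) 0) (Set.Ioo 0 a) := by
    apply (Continuous.integrableOn_Ioc (by continuity)).mono_set Set.Ioo_subset_Ioc_self
  have hint2 : IntegrableOn (fun s : ℝ => max (a - s) 0) (Set.Ico a B) := by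
    apply (Continuous.integrableOn_Icc (by continuity)).mono_set Set.Ico_subset_Icc_self
  rw [← hsplit, MeasureTheory.setIntegral_union hdisj measurableSet_Ico hint1 hint2]
  have h2 : ∫ s in Set.Ico a B, max (a - s) 0 = 0 := by
    rw [MeasureTheory.setIntegral_congr_fun measurableSet_Ico
      (fun s hs => max_eq_right (by linarith [hs.1] : a - s ≤ 0))]
    simp
  have h1 : ∫ s in Set.Ioo (0:ℝ) a, max (a - s) 0 = a ^ 2 / 2 := by
    rw [MeasureTheory.setIntegral_congr_fun measurableSet_Ioo
      (fun s hs => max_eq_left (by linarith [hs.2] : 0 ≤ a - s))]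
    rw [← MeasureTheory.integral_Ioc_eq_integral_Ioo,
      ← intervalIntegral.integral_of_le ha.le]
    rw [intervalIntegral.integral_sub intervalIntegrable_const
      intervalIntegral.intervalIntegrable_id]
    simp [integral_id]
    ring
  rw [h1, h2, add_zero]

lemma helper_ofReal_max (r : ℝ) : ENNReal.ofReal r = ENNReal.ofReal (max r 0) := by
  rcases le_total r 0 with h | h
  · simp [ENNReal.ofReal_eq_zero.2 h, max_eq_right h]
  · rw [max_eq_left h]

lemma helper_inner_lint {B : ℝ} {a : ℝ} (haB : a ≤ B) :
    ∫⁻ s in Set.Ioo (0:ℝ) B, ENNReal.ofReal (a - s)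
      = ENNReal.ofReal ((max a 0) ^ 2 / 2) := by
  rcases le_or_gt a 0 with ha | ha
  · rw [max_eq_right ha]
    norm_num
    rw [← lintegral_zero (μ := volume.restrict (Set.Ioo (0:ℝ) B))]
    apply setLIntegral_congr_fun measurableSet_Ioo
    intro s hs
    exact ENNReal.ofReal_eq_zero.2 (by linarith [hs.1])
  · rw [max_eq_left ha.le]
    have hcong : ∫⁻ s in Set.Ioo (0:ℝ) B, ENNReal.ofReal (a - s)
        = ∫⁻ s in Set.Ioo (0:ℝ) B, ENNReal.ofReal (max (a - s) 0) := by
      apply lintegral_congr fun s => helper_ofReal_max _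
    rw [hcong]
    rw [← ofReal_integral_eq_lintegral_ofReal]
    · rw [helper_inner_real ha haB]
    · exact (Continuous.integrableOn_Icc (by continuity)).mono_set
        Set.Ioo_subset_Icc_self
    · filter_upwards with s using le_max_right _ _

lemma helper_exp_int {lam c : ℝ} (hlam : 0 < lam) :
    ∫ x in (0:ℝ)..c, lam * Real.exp (-(lam * x)) * ((c - x) ^ 2 / 2)
      = c ^ 2 / 2 - c / lam + (1 - Real.exp (-(lam * c))) / lam ^ 2 := by
  have hlam' : lam ≠ 0 := hlam.ne'
  set F : ℝ → ℝ := fun x =>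
    -(Real.exp (-(lam * x)) * ((c - x) ^ 2 / 2 - (c - x) / lam + 1 / lam ^ 2)) with hF
  have hderiv : ∀ x ∈ Set.uIcc (0:ℝ) c,
      HasDerivAt F (lam * Real.exp (-(lam * x)) * ((c - x) ^ 2 / 2)) x := by
    intro x _
    have hexp : HasDerivAt (fun x => Real.exp (-(lam * x)))
        (Real.exp (-(lam * x)) * (-lam)) x := by
      simpa using (((hasDerivAt_id x).const_mul lam).neg).exp
    have hu : HasDerivAt (fun x => c - x) (-1) x := (hasDerivAt_id x).const_sub c
    have hG := (((hu.pow 2).div_const 2).sub (hu.div_const lam)).add_const (1 / lam ^ 2 : ℝ)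
    refine ((hexp.mul hG).neg).congr_deriv ?_
    push_cast
    simp only [Pi.sub_apply, Pi.pow_apply]
    field_simp
    ring
  rw [intervalIntegral.integral_eq_sub_of_hasDerivAt hderiv
    ((Continuous.mul (by continuity) (by continuity)).intervalIntegrable _ _)]
  simp only [hF, mul_zero, neg_zero, Real.exp_zero, sub_self, sub_zero]
  field_simp
  ring

lemma helper_expPDFReal_of_nonneg {r x : ℝ} (hx : 0 ≤ x) :
    exponentialPDFReal r x = r * Real.exp (-(r * x)) := by
  simp [exponentialPDFReal, gammaPDFReal, if_pos hx, Real.rpow_one, Real.Gamma_one,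
    Real.rpow_zero]

lemma helper_expPDFReal_of_neg {r x : ℝ} (hx : x < 0) :
    exponentialPDFReal r x = 0 := by
  simp [exponentialPDFReal, gammaPDFReal, if_neg (not_le.2 hx)]

end Helpers

/-- The missing probability of the M/U/1/1-D bufferless system: with `ρ = λ/μ`, `ν = m₀μ`,
`X` exponential of rate `λ`, `S` uniform on `(0, 2/μ)`, `θ` uniform on `(0, 1/ν)`, mutually
independent, `P(X + S + θ < 1/ν) = 1/(4m₀) + (m₀(1 − e^{−ρ/m₀}) − ρ)/(2ρ²)`. -/
theorem stmt_13 {Ω : Type*} [MeasurableSpace Ω] (P : Measure Ω) [IsProbabilityMeasure P]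
    (lam mu rho m₀ nu : ℝ) (hlam : 0 < lam) (hmu : 0 < mu) (hrho : rho = lam / mu)
    (hm₀ : 1 ≤ m₀) (hnu : nu = m₀ * mu)
    (X S T : Ω → ℝ) (hX : Measurable X) (hS : Measurable S) (hT : Measurable T)
    (hindep : iIndepFun ![X, S, T] P)
    (hXdist : Measure.map X P = expMeasure lam)
    (hSdist : Measure.map S P
      = (ENNReal.ofReal (mu / 2)) • volume.restrict (Set.Ioo (0 : ℝ) (2 / mu)))
    (hTdist : Measure.map T P
      = (ENNReal.ofReal nu) • volume.restrict (Set.Ioo (0 : ℝ) (1 / nu))) :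
    P {ω | X ω + S ω + T ω < 1 / nu}
      = ENNReal.ofReal
          (1 / (4 * m₀) + (m₀ * (1 - Real.exp (-rho / m₀)) - rho) / (2 * rho ^ 2)) := by
  have hm0 : (0:ℝ) < m₀ := lt_of_lt_of_le one_pos hm₀
  have hnu0 : 0 < nu := hnu ▸ mul_pos hm0 hmu
  set c : ℝ := 1 / nu with hcdef
  have hc0 : 0 < c := by positivity
  have hcle : c ≤ 2 / mu := by
    rw [hcdef, hnu, div_le_div_iff₀ (by positivity) hmu]
    nlinarith
  -- measurability of the tuple
  have hmeas : ∀ i, Measurable (![X, S, T] i) := by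
    intro i; fin_cases i <;> assumption
  -- independence facts
  have hXSindep : IndepFun X S P := by
    have h := hindep.indepFun (show (0:Fin 3) ≠ 1 by decide)
    simpa using h
  have hYT : IndepFun (fun ω => X ω + S ω) T P := by
    have h := hindep.indepFun_add_left hmeas 0 1 2 (by decide) (by decide)
    exact h
  have hY : Measurable (fun ω => X ω + S ω) := hX.add hS
  have hmapXS : P.map (fun ω => (X ω, S ω)) = (P.map X).prod (P.map S) :=
    (indepFun_iff_map_prod_eq_prod_map_map hX.aemeasurable hS.aemeasurable).1 hXSindep
  have hmapYT : P.map (fun ω => (X ω + S ω, T ω))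
      = (P.map (fun ω => X ω + S ω)).prod (P.map T) :=
    (indepFun_iff_map_prod_eq_prod_map_map hY.aemeasurable hT.aemeasurable).1 hYT
  haveI : IsProbabilityMeasure (P.map X) := Measure.isProbabilityMeasure_map hX.aemeasurable
  haveI : IsProbabilityMeasure (P.map S) := Measure.isProbabilityMeasure_map hS.aemeasurable
  haveI : IsProbabilityMeasure (P.map T) := Measure.isProbabilityMeasure_map hT.aemeasurable
  haveI : IsProbabilityMeasure (P.map (fun ω => X ω + S ω)) :=
    Measure.isProbabilityMeasure_map hY.aemeasurable
  set g0 : ℝ → ℝ≥0∞ := fun y => ENNReal.ofReal (min (c - y) c) with hg0def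
  have hg0 : Measurable g0 :=
    (((continuous_const.sub continuous_id').min continuous_const).measurable).ennreal_ofReal
  have hmsble : MeasurableSet {p : ℝ × ℝ | p.1 + p.2 < c} :=
    measurableSet_lt (measurable_fst.add measurable_snd) measurable_const
  -- the T-section measure
  have hTset : ∀ y : ℝ, (P.map T) {t | y + t < c} = ENNReal.ofReal nu * g0 y := by
    intro y
    have hset : {t : ℝ | y + t < c} = Set.Iio (c - y) := by
      ext t; simp only [Set.mem_setOf_eq, Set.mem_Iio]; constructor <;> intro <;> linarith
    have hinter : Set.Iio (c - y) ∩ Set.Ioo 0 c = Set.Ioo 0 (min (c - y) c) := by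
      ext t
      simp only [Set.mem_inter_iff, Set.mem_Iio, Set.mem_Ioo, lt_min_iff]
      constructor
      · rintro ⟨h1, h2, h3⟩; exact ⟨h2, h1, h3⟩
      · rintro ⟨h1, h2, h3⟩; exact ⟨h2, h1, h3⟩
    rw [hTdist, hset, Measure.smul_apply, Measure.restrict_apply measurableSet_Iio,
      hinter, Real.volume_Ioo, smul_eq_mul, hg0def]
    simp
  -- main computation chain
  have hchain : P {ω | X ω + S ω + T ω < c}
      = ENNReal.ofReal nu * ∫⁻ x, ∫⁻ s, g0 (x + s) ∂(P.map S) ∂(P.map X) := by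
    have hYSmeas : Measurable (fun ω => (X ω + S ω, T ω)) := hY.prodMk hT
    have e1 : P {ω | X ω + S ω + T ω < c}
        = P.map (fun ω => (X ω + S ω, T ω)) {p : ℝ × ℝ | p.1 + p.2 < c} := by
      rw [Measure.map_apply hYSmeas hmsble]
      rfl
    rw [e1, hmapYT, Measure.prod_apply hmsble]
    have e2 : ∀ y : ℝ, (P.map T) (Prod.mk y ⁻¹' {p : ℝ × ℝ | p.1 + p.2 < c})
        = ENNReal.ofReal nu * g0 y := fun y => hTset y
    rw [lintegral_congr e2, lintegral_const_mul _ hg0]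
    congr 1
    rw [lintegral_map hg0 hY]
    have hg0p : Measurable (fun p : ℝ × ℝ => g0 (p.1 + p.2)) :=
      hg0.comp (measurable_fst.add measurable_snd)
    have e3 : ∫⁻ ω, g0 (X ω + S ω) ∂P
        = ∫⁻ p : ℝ × ℝ, g0 (p.1 + p.2) ∂(P.map (fun ω => (X ω, S ω))) := by
      rw [lintegral_map hg0p (hX.prodMk hS)]
    rw [e3, hmapXS, MeasureTheory.lintegral_prod _ hg0p.aemeasurable]
  -- the inner S-integral for nonnegative x
  have hSint : ∀ x : ℝ, 0 ≤ x → ∫⁻ s, g0 (x + s) ∂(P.map S)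
      = ENNReal.ofReal (mu / 2) * ENNReal.ofReal ((max (c - x) 0) ^ 2 / 2) := by
    intro x hx
    rw [hSdist, lintegral_smul_measure]
    congr 1
    have hcong : ∫⁻ s in Set.Ioo (0:ℝ) (2 / mu), g0 (x + s)
        = ∫⁻ s in Set.Ioo (0:ℝ) (2 / mu), ENNReal.ofReal ((c - x) - s) := by
      apply setLIntegral_congr_fun measurableSet_Ioo
      intro s hs
      show ENNReal.ofReal (min (c - (x + s)) c) = ENNReal.ofReal ((c - x) - s)
      rw [min_eq_left (by linarith [hs.1] : c - (x + s) ≤ c)]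
      ring_nf
    rw [hcong, helper_inner_lint (by linarith : c - x ≤ 2 / mu)]
  -- rewrite the X-integral over the exponential measure
  have hXint : ∫⁻ x, ∫⁻ s, g0 (x + s) ∂(P.map S) ∂(P.map X)
      = ∫⁻ x, ENNReal.ofReal
          (exponentialPDFReal lam x * (mu / 2 * ((max (c - x) 0) ^ 2 / 2))) := by
    rw [hXdist]
    have hexpm : expMeasure lam = volume.withDensity (exponentialPDF lam) := rfl
    have hpdfmeas : Measurable (exponentialPDF lam) :=
      (measurable_exponentialPDFReal lam).ennreal_ofReal
    rw [hexpm, lintegral_withDensity_eq_lintegral_mul_non_measurable _ hpdfmeas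
      (Filter.Eventually.of_forall fun x => (by rw [exponentialPDF]; exact ENNReal.ofReal_lt_top : exponentialPDF lam x < ⊤))]
    apply lintegral_congr
    intro x
    rcases lt_or_ge x 0 with hx | hx
    · simp only [Pi.mul_apply]
      rw [exponentialPDF_of_neg hx]
      rw [show exponentialPDFReal lam x = 0 from helper_expPDFReal_of_neg hx]
      simp
    · simp only [Pi.mul_apply]
      rw [hSint x hx, exponentialPDF, ← mul_assoc,
        ← ENNReal.ofReal_mul (exponentialPDFReal_nonneg hlam x),
        ← ENNReal.ofReal_mul (mul_nonneg (exponentialPDFReal_nonneg hlam x)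
          (by linarith : (0:ℝ) ≤ mu / 2)), mul_assoc]
  -- convert to a real integral
  set φ : ℝ → ℝ := fun x =>
    exponentialPDFReal lam x * (mu / 2 * ((max (c - x) 0) ^ 2 / 2)) with hφdef
  have hφ_nonneg : ∀ x, 0 ≤ φ x := fun x =>
    mul_nonneg (exponentialPDFReal_nonneg hlam x)
      (mul_nonneg (by linarith : (0:ℝ) ≤ mu / 2) (by positivity))
  have hφ_zero : ∀ x ∉ Set.Icc 0 c, φ x = 0 := by
    intro x hx
    rw [Set.mem_Icc, not_and_or] at hx
    rcases hx with hx | hx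
    · simp only [hφdef]
      rw [helper_expPDFReal_of_neg (not_le.1 hx), zero_mul]
    · simp only [hφdef]
      have h0 : max (c - x) 0 = 0 := max_eq_right (by linarith [not_le.1 hx])
      simp [h0]
  have hφ_meas : Measurable φ := by
    apply (measurable_exponentialPDFReal lam).mul
    exact Continuous.measurable (by fun_prop)
  have hφ_ind : φ = (Set.Icc 0 c).indicator φ := by
    ext x
    rw [Set.indicator_apply]
    split_ifs with h
    · rfl
    · exact hφ_zero x h
  have hφ_int : Integrable φ := by
    rw [hφ_ind, integrable_indicator_iff measurableSet_Icc]
    have hfin' : volume (Set.Icc (0:ℝ) c) ≠ ⊤ := by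
      rw [Real.volume_Icc]; exact ENNReal.ofReal_ne_top
    have hbdd : ∀ᵐ x ∂(volume.restrict (Set.Icc (0:ℝ) c)),
        ‖φ x‖ ≤ lam * (mu / 2 * (c ^ 2 / 2)) := by
      filter_upwards [ae_restrict_mem measurableSet_Icc] with x hx
      rw [Real.norm_of_nonneg (hφ_nonneg x)]
      have h1 : exponentialPDFReal lam x ≤ lam := by
        rw [helper_expPDFReal_of_nonneg hx.1]
        nlinarith [Real.exp_le_one_iff.2 (by nlinarith [hx.1] : -(lam * x) ≤ 0)]
      have h2 : max (c - x) 0 ≤ c := max_le (by linarith [hx.1]) hc0.le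
      have h3 : (max (c - x) 0) ^ 2 ≤ c ^ 2 :=
        pow_le_pow_left₀ (le_max_right _ _) h2 2
      have h4 := exponentialPDFReal_nonneg hlam x
      simp only [hφdef]
      apply mul_le_mul h1 _ _ hlam.le
      · exact mul_le_mul_of_nonneg_left (by linarith) (by linarith : (0:ℝ) ≤ mu / 2)
      · exact mul_nonneg (by linarith : (0:ℝ) ≤ mu / 2) (by positivity)
    exact Measure.integrableOn_of_bounded hfin' hφ_meas.aestronglyMeasurable hbdd
  have hφ_val : ∫ x, φ x
      = mu / 2 * (c ^ 2 / 2 - c / lam + (1 - Real.exp (-(lam * c))) / lam ^ 2) := by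
    conv_lhs => rw [hφ_ind]
    rw [integral_indicator measurableSet_Icc, MeasureTheory.integral_Icc_eq_integral_Ioc]
    have hcong : ∫ x in Set.Ioc (0:ℝ) c, φ x
        = ∫ x in Set.Ioc (0:ℝ) c, mu / 2 * (lam * Real.exp (-(lam * x)) * ((c - x) ^ 2 / 2)) := by
      apply MeasureTheory.setIntegral_congr_fun measurableSet_Ioc
      intro x hx
      simp only [hφdef]
      rw [helper_expPDFReal_of_nonneg hx.1.le, max_eq_left (by linarith [hx.2] : 0 ≤ c - x)]
      ring
    rw [hcong, MeasureTheory.integral_const_mul, ← intervalIntegral.integral_of_le hc0.le,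
      helper_exp_int hlam]
  have hfin : P {ω | X ω + S ω + T ω < c}
      = ENNReal.ofReal (nu * (mu / 2
          * (c ^ 2 / 2 - c / lam + (1 - Real.exp (-(lam * c))) / lam ^ 2))) := by
    rw [hchain, hXint,
      ← ofReal_integral_eq_lintegral_ofReal hφ_int (Filter.Eventually.of_forall hφ_nonneg),
      hφ_val, ← ENNReal.ofReal_mul hnu0.le]
  rw [hfin]
  congr 1
  have hexp_eq : -(lam * c) = -rho / m₀ := by
    rw [hcdef, hnu, hrho]
    field_simp
  rw [show Real.exp (-rho / m₀) = Real.exp (-(lam * c)) by rw [hexp_eq]]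
  rw [hcdef, hnu]
  have hrho0 : rho ≠ 0 := by rw [hrho]; positivity
  rw [hrho] at hrho0 ⊢
  field_simp
  ring
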